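/- If K is a compact Hausdorff space, Y is a weakly Hausdorff topological space, and f : K → Y is continuous, then the image f[K], with the subspace topology from Y, is a Hausdorff space. -/
import Mathlib

/-- The continuous image of a compact Hausdorff space in a weakly Hausdorff space,
with the subspace topology, is Hausdorff. -/
theorem weaklyHausdorff_image_t2 {Y : Type u} [TopologicalSpace Y]
    (hwH : ∀ (L : Type v) [TopologicalSpace L] [CompactSpace L] [T2Space L]
      (g : L → Y), Continuous g → IsClosed (Set.range g))
    (K : Type v) [TopologicalSpace K] [CompactSpace K] [T2Space K]
    (f : K → Y) (hf : Continuous f) :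
    T2Space (Set.range f) := by
  constructor
  rintro ⟨a, ha⟩ ⟨b, hb⟩ hne
  have hab : a ≠ b := fun h => hne (Subtype.ext h)
  -- singletons in Y are closed (image of PUnit)
  have hsingle : ∀ y : Y, IsClosed ({y} : Set Y) := by
    intro y
    have := hwH PUnit (fun _ => y) continuous_const
    simpa [Set.range_const] using this
  -- fibers are closed and compact
  have hFa : IsClosed (f ⁻¹' {a}) := (hsingle a).preimage hf
  have hFb : IsClosed (f ⁻¹' {b}) := (hsingle b).preimage hf
  have hdisj : Disjoint (f ⁻¹' {a}) (f ⁻¹' {b}) := by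
    rw [Set.disjoint_left]
    rintro x (rfl : f x = a) (h2 : f x = b)
    exact hab h2
  obtain ⟨U, V, hU, hV, hUa, hVb, hUV⟩ :=
    SeparatedNhds.of_isCompact_isCompact hFa.isCompact hFb.isCompact hdisj
  -- images of the closed complements are closed in Y
  have himg : ∀ S : Set K, IsClosed S → IsClosed (f '' S) := by
    intro S hS
    have : CompactSpace S := isCompact_iff_compactSpace.mp hS.isCompact
    have := hwH S (f ∘ Subtype.val) (hf.comp continuous_subtype_val)
    simpa [Set.range_comp, Subtype.range_coe] using this
  have hCU : IsClosed (f '' Uᶜ) := himg _ hU.isClosed_compl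
  have hCV : IsClosed (f '' Vᶜ) := himg _ hV.isClosed_compl
  refine ⟨Subtype.val ⁻¹' (f '' Uᶜ)ᶜ, Subtype.val ⁻¹' (f '' Vᶜ)ᶜ,
    hCU.isOpen_compl.preimage continuous_subtype_val,
    hCV.isOpen_compl.preimage continuous_subtype_val, ?_, ?_, ?_⟩
  · rintro ⟨x, hxU, rfl⟩
    exact hxU (hUa rfl)
  · rintro ⟨x, hxV, rfl⟩
    exact hxV (hVb rfl)
  · rw [Set.disjoint_left]
    rintro ⟨y, x, rfl⟩ h1 h2
    have hxU : x ∈ U := by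
      by_contra hx; exact h1 ⟨x, hx, rfl⟩
    have hxV : x ∈ V := by
      by_contra hx; exact h2 ⟨x, hx, rfl⟩
    exact Set.disjoint_left.mp hUV hxU hxV
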